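/- Let Ω be a positive diagonal matrix. The one-step map of the AAVF method applied to q'' + Ω²q = f(q), namely q₁ = cos(hΩ) q₀ + h sinc(hΩ) p₀ + h² φ₂(h²Ω²) ∫₀¹ f((1−σ)q₀ + σq₁) dσ, p₁ = −Ω sin(hΩ) q₀ + cos(hΩ) p₀ + h sinc(hΩ) ∫₀¹ f((1−σ)q₀ + σq₁) dσ, satisfies the momentum-like relation q₁ − q₀ = Ω⁻¹ tan(hΩ/2) (p₁ + p₀), provided cos(hω_j/2) ≠ 0 for each diagonal entry ω_j. -/

import Mathlib

noncomputable def phi2 (V : ℝ) : ℝ :=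
  if V = 0 then 1/2 else (1 - Real.cos (Real.sqrt V)) / V

noncomputable def sinc (y : ℝ) : ℝ :=
  if y = 0 then 1 else Real.sin y / y

/-- One AAVF step satisfies the momentum-like relation
`q₁ − q₀ = Ω⁻¹ tan(hΩ/2)(p₁ + p₀)` (componentwise), provided `cos(hωⱼ/2) ≠ 0`. -/
theorem stmt11 (n : ℕ) (Ω : Fin n → ℝ) (hΩ : ∀ j, 0 < Ω j) (h : ℝ) (hh : 0 < h)
    (f : (Fin n → ℝ) → (Fin n → ℝ)) (q₀ p₀ q₁ p₁ I : Fin n → ℝ)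
    (hI : ∀ j, I j = ∫ σ in (0:ℝ)..1, f ((1 - σ) • q₀ + σ • q₁) j)
    (hq : ∀ j, q₁ j = Real.cos (h * Ω j) * q₀ j + h * sinc (h * Ω j) * p₀ j
        + h^2 * phi2 ((h * Ω j)^2) * I j)
    (hp : ∀ j, p₁ j = -(Ω j) * Real.sin (h * Ω j) * q₀ j + Real.cos (h * Ω j) * p₀ j
        + h * sinc (h * Ω j) * I j)
    (hcos : ∀ j, Real.cos (h * Ω j / 2) ≠ 0) :
    ∀ j, q₁ j - q₀ j = (Ω j)⁻¹ * Real.tan (h * Ω j / 2) * (p₁ j + p₀ j) := by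
  intro j
  have hΩj := hΩ j
  have hx : h * Ω j ≠ 0 := by positivity
  have hx2 : (h * Ω j)^2 ≠ 0 := pow_ne_zero _ hx
  have hsqrt : Real.sqrt ((h * Ω j)^2) = h * Ω j := by
    rw [Real.sqrt_sq (by positivity)]
  have hphi : phi2 ((h * Ω j)^2) = (1 - Real.cos (h * Ω j)) / (h * Ω j)^2 := by
    rw [phi2, if_neg hx2, hsqrt]
  have hsinc : sinc (h * Ω j) = Real.sin (h * Ω j) / (h * Ω j) := by
    rw [sinc, if_neg hx]
  have hc := hcos j
  have hsin2 : Real.sin (h * Ω j) = 2 * Real.sin (h * Ω j / 2) * Real.cos (h * Ω j / 2) := by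
    rw [← Real.sin_two_mul]; ring_nf
  have hcos2 : Real.cos (h * Ω j) = 2 * Real.cos (h * Ω j / 2)^2 - 1 := by
    rw [← Real.cos_two_mul]; ring_nf
  rw [hq j, hp j, hphi, hsinc, Real.tan_eq_sin_div_cos, hsin2, hcos2]
  have hpyth := Real.sin_sq_add_cos_sq (h * Ω j / 2)
  field_simp
  linear_combination (2*Real.cos (h*Ω j/2)*((Ω j)^2*q₀ j - I j)) * hpyth
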